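/- Let k be a field with characteristic not 2 and let A = k[x]/(x²) be the connected cochain DG algebra with |x| = 1 and zero differential. Let L be the DG A-bimodule with underlying graded bimodule A·e (e a free generator of degree 0, e·x̄ = x̄·e) and differential determined by ∂_L(e) = x̄e, and let L^∨ be the DG A-bimodule with underlying graded bimodule A·f (f a free generator of degree 0, f·x̄ = x̄·f) and differential determined by ∂_{L^∨}(f) = −x̄f. Then: (i) the maps θ : L ⊗_A L^∨ → A with θ(e ⊗ f) = 1 and ω : L^∨ ⊗_A L → A with ω(f ⊗ e) = 1 are isomorphisms of DG A-bimodules, so L is an invertible DG A-bimodule; (ii) nevertheless, L is not isomorphic to Σ^i A(φ) as a DG A-bimodule for any integer i and any DG algebra automorphism φ of A. -/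
import Mathlib


/-!
Common infrastructure: connected cochain DG algebras over a field `k`,
(left/right/bi-) DG modules, Hom-complexes, torsion functors, etc.
-/

universe u v w

open DirectSum TensorProduct

/-- A connected cochain DG algebra over a field `k`:
a ℤ-graded unital associative `k`-algebra `A = ⊕ᵢ Aⁱ` with `Aⁱ = 0` for `i < 0`,
`A⁰ = k·1`, equipped with a degree `+1` differential `d` with `d ∘ d = 0`
satisfying the graded Leibniz rule. -/
structure ConnCDGA (k : Type u) [Field k] (A : Type v) [Ring A] [Algebra k A] where
  gr : ℤ → Submodule k A
  decomp : DirectSum.Decomposition gr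
  one_mem : (1 : A) ∈ gr 0
  mul_mem : ∀ {i j : ℤ} {a b : A}, a ∈ gr i → b ∈ gr j → a * b ∈ gr (i + j)
  connected : ∀ i : ℤ, i < 0 → gr i = ⊥
  deg_zero : gr 0 = Submodule.span k {(1 : A)}
  d : A →ₗ[k] A
  d_mem : ∀ {i : ℤ} {a : A}, a ∈ gr i → d a ∈ gr (i + 1)
  d_sq : ∀ a : A, d (d a) = 0
  leibniz : ∀ {i j : ℤ} {a b : A}, a ∈ gr i → b ∈ gr j →
    d (a * b) = d a * b + ((-1 : k) ^ i) • (a * d b)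

variable {k : Type u} [Field k] {A : Type v} [Ring A] [Algebra k A]
variable {B : Type v} [Ring B] [Algebra k B]

/-- A DG algebra automorphism of a connected cochain DG algebra:
a degree-preserving `k`-algebra automorphism commuting with the differential. -/
structure IsDGAut (𝒜 : ConnCDGA k A) (φ : A → A) : Prop where
  bij : Function.Bijective φ
  map_add : ∀ x y : A, φ (x + y) = φ x + φ y
  map_mul : ∀ x y : A, φ (x * y) = φ x * φ y
  map_one : φ 1 = 1
  map_ksmul : ∀ (c : k) (x : A), φ (c • x) = c • φ x
  map_gr : ∀ {i : ℤ} {x : A}, x ∈ 𝒜.gr i → φ x ∈ 𝒜.gr i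
  map_d : ∀ x : A, φ (𝒜.d x) = 𝒜.d (φ x)

/-- A left DG module over a connected cochain DG algebra `𝒜`. -/
structure DGMod (𝒜 : ConnCDGA k A) (M : Type w) [AddCommGroup M] [Module k M] where
  smul : A → M → M
  smul_add : ∀ (a : A) (m n : M), smul a (m + n) = smul a m + smul a n
  add_smul : ∀ (a b : A) (m : M), smul (a + b) m = smul a m + smul b m
  mul_smul : ∀ (a b : A) (m : M), smul (a * b) m = smul a (smul b m)
  one_smul : ∀ m : M, smul 1 m = m
  ksmul_left : ∀ (c : k) (a : A) (m : M), smul (c • a) m = c • smul a m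
  ksmul_right : ∀ (c : k) (a : A) (m : M), smul a (c • m) = c • smul a m
  gr : ℤ → Submodule k M
  decomp : DirectSum.Decomposition gr
  smul_mem : ∀ {i j : ℤ} {a : A} {m : M}, a ∈ 𝒜.gr i → m ∈ gr j → smul a m ∈ gr (i + j)
  d : M →ₗ[k] M
  d_mem : ∀ {i : ℤ} {m : M}, m ∈ gr i → d m ∈ gr (i + 1)
  d_sq : ∀ m : M, d (d m) = 0
  leibniz : ∀ {i : ℤ} {a : A} (m : M), a ∈ 𝒜.gr i →
    d (smul a m) = smul (𝒜.d a) m + ((-1 : k) ^ i) • smul a (d m)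

/-- A right DG module over a connected cochain DG algebra `𝒜`
(equivalently, a left DG module over the opposite DG algebra `𝒜ᵒᵖ`). -/
structure DGRMod (𝒜 : ConnCDGA k A) (M : Type w) [AddCommGroup M] [Module k M] where
  rsmul : M → A → M
  rsmul_add : ∀ (a : A) (m n : M), rsmul (m + n) a = rsmul m a + rsmul n a
  add_rsmul : ∀ (a b : A) (m : M), rsmul m (a + b) = rsmul m a + rsmul m b
  mul_rsmul : ∀ (a b : A) (m : M), rsmul m (a * b) = rsmul (rsmul m a) b
  one_rsmul : ∀ m : M, rsmul m 1 = m
  krsmul_left : ∀ (c : k) (a : A) (m : M), rsmul (c • m) a = c • rsmul m a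
  krsmul_right : ∀ (c : k) (a : A) (m : M), rsmul m (c • a) = c • rsmul m a
  gr : ℤ → Submodule k M
  decomp : DirectSum.Decomposition gr
  rsmul_mem : ∀ {i j : ℤ} {m : M} {a : A}, m ∈ gr i → a ∈ 𝒜.gr j → rsmul m a ∈ gr (i + j)
  d : M →ₗ[k] M
  d_mem : ∀ {i : ℤ} {m : M}, m ∈ gr i → d m ∈ gr (i + 1)
  d_sq : ∀ m : M, d (d m) = 0
  leibniz : ∀ {i : ℤ} {m : M} (a : A), m ∈ gr i →
    d (rsmul m a) = rsmul (d m) a + ((-1 : k) ^ i) • rsmul m (𝒜.d a)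

/-- A DG bimodule over a connected cochain DG algebra `𝒜`
(equivalently, a DG module over the enveloping DG algebra `𝒜ᵉ = 𝒜 ⊗ 𝒜ᵒᵖ`). -/
structure DGBimod (𝒜 : ConnCDGA k A) (M : Type w) [AddCommGroup M] [Module k M]
    extends DGMod 𝒜 M where
  rsmul : M → A → M
  rsmul_add : ∀ (a : A) (m n : M), rsmul (m + n) a = rsmul m a + rsmul n a
  add_rsmul : ∀ (a b : A) (m : M), rsmul m (a + b) = rsmul m a + rsmul m b
  mul_rsmul : ∀ (a b : A) (m : M), rsmul m (a * b) = rsmul (rsmul m a) b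
  one_rsmul : ∀ m : M, rsmul m 1 = m
  krsmul_left : ∀ (c : k) (a : A) (m : M), rsmul (c • m) a = c • rsmul m a
  krsmul_right : ∀ (c : k) (a : A) (m : M), rsmul m (c • a) = c • rsmul m a
  rsmul_mem : ∀ {i j : ℤ} {m : M} {a : A}, m ∈ gr i → a ∈ 𝒜.gr j → rsmul m a ∈ gr (i + j)
  rleibniz : ∀ {i : ℤ} {m : M} (a : A), m ∈ gr i →
    d (rsmul m a) = rsmul (d m) a + ((-1 : k) ^ i) • rsmul m (𝒜.d a)
  smul_rsmul_assoc : ∀ (a : A) (m : M) (b : A), rsmul (smul a m) b = smul a (rsmul m b)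

/-- The underlying right DG module of a DG bimodule. -/
def DGBimod.toDGRMod {𝒜 : ConnCDGA k A} {M : Type w} [AddCommGroup M] [Module k M]
    (ℳ : DGBimod 𝒜 M) : DGRMod 𝒜 M where
  rsmul := ℳ.rsmul
  rsmul_add := ℳ.rsmul_add
  add_rsmul := ℳ.add_rsmul
  mul_rsmul := ℳ.mul_rsmul
  one_rsmul := ℳ.one_rsmul
  krsmul_left := ℳ.krsmul_left
  krsmul_right := ℳ.krsmul_right
  gr := ℳ.gr
  decomp := ℳ.decomp
  rsmul_mem := ℳ.rsmul_mem
  d := ℳ.d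
  d_mem := ℳ.d_mem
  d_sq := ℳ.d_sq
  leibniz := ℳ.rleibniz

/-- The torsion DG submodule `Γ_𝔪(M) = {m ∈ M ∣ A^{≥n} m = 0 for some n ≥ 1}`. -/
def DGMod.torsion {𝒜 : ConnCDGA k A} {M : Type w} [AddCommGroup M] [Module k M]
    (ℳ : DGMod 𝒜 M) : Set M :=
  {m : M | ∃ n : ℤ, 1 ≤ n ∧ ∀ a ∈ (⨆ (i : ℤ) (_ : n ≤ i), 𝒜.gr i), ℳ.smul a m = 0}

/-- `M` is acyclic, i.e. `H(M) = 0`. -/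
def DGMod.IsAcyclic {𝒜 : ConnCDGA k A} {M : Type w} [AddCommGroup M] [Module k M]
    (ℳ : DGMod 𝒜 M) : Prop :=
  ∀ m : M, ℳ.d m = 0 → ∃ x : M, ℳ.d x = m

/-- `M` is acyclic, i.e. `H(M) = 0` (right module version). -/
def DGRMod.IsAcyclic {𝒜 : ConnCDGA k A} {M : Type w} [AddCommGroup M] [Module k M]
    (ℳ : DGRMod 𝒜 M) : Prop :=
  ∀ m : M, ℳ.d m = 0 → ∃ x : M, ℳ.d x = m

/-- A morphism of left DG modules: a degree-0 `A`-linear chain map. -/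
structure DGHom {𝒜 : ConnCDGA k A} {M : Type w} {N : Type w}
    [AddCommGroup M] [Module k M] [AddCommGroup N] [Module k N]
    (ℳ : DGMod 𝒜 M) (𝒩 : DGMod 𝒜 N) where
  toFun : M → N
  map_add : ∀ x y : M, toFun (x + y) = toFun x + toFun y
  map_ksmul : ∀ (c : k) (x : M), toFun (c • x) = c • toFun x
  map_smul : ∀ (a : A) (x : M), toFun (ℳ.smul a x) = 𝒩.smul a (toFun x)
  map_gr : ∀ {i : ℤ} {x : M}, x ∈ ℳ.gr i → toFun x ∈ 𝒩.gr i
  map_d : ∀ x : M, toFun (ℳ.d x) = 𝒩.d (toFun x)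

/-- A homogeneous degree-`i` element of the Hom-complex `Hom_A(M, N)` of left DG modules:
an `A`-linear map of degree `i` (with Koszul sign rule `f(am) = (-1)^{i|a|} a f(m)`). -/
structure HomDeg {𝒜 : ConnCDGA k A} {M : Type w} {N : Type w}
    [AddCommGroup M] [Module k M] [AddCommGroup N] [Module k N]
    (ℳ : DGMod 𝒜 M) (𝒩 : DGMod 𝒜 N) (i : ℤ) where
  toFun : M → N
  map_add : ∀ x y : M, toFun (x + y) = toFun x + toFun y
  map_ksmul : ∀ (c : k) (x : M), toFun (c • x) = c • toFun x
  map_gr : ∀ {j : ℤ} {x : M}, x ∈ ℳ.gr j → toFun x ∈ 𝒩.gr (j + i)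
  map_smul : ∀ {j : ℤ} {a : A} (x : M), a ∈ 𝒜.gr j →
    toFun (ℳ.smul a x) = ((-1 : k) ^ (i * j)) • 𝒩.smul a (toFun x)

/-- A homogeneous degree-`i` element of the Hom-complex `Hom_{Aᵒᵖ}(M, N)` of right DG modules. -/
structure RHomDeg {𝒜 : ConnCDGA k A} {M : Type w} {N : Type w}
    [AddCommGroup M] [Module k M] [AddCommGroup N] [Module k N]
    (ℳ : DGRMod 𝒜 M) (𝒩 : DGRMod 𝒜 N) (i : ℤ) where
  toFun : M → N
  map_add : ∀ x y : M, toFun (x + y) = toFun x + toFun y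
  map_ksmul : ∀ (c : k) (x : M), toFun (c • x) = c • toFun x
  map_gr : ∀ {j : ℤ} {x : M}, x ∈ ℳ.gr j → toFun x ∈ 𝒩.gr (j + i)
  map_rsmul : ∀ (x : M) (a : A), toFun (ℳ.rsmul x a) = 𝒩.rsmul (toFun x) a

/-- A homogeneous degree-`i` element of the Hom-complex `Hom_{Aᵉ}(M, N)` of DG bimodules. -/
structure BiHomDeg {𝒜 : ConnCDGA k A} {M : Type w} {N : Type w}
    [AddCommGroup M] [Module k M] [AddCommGroup N] [Module k N]
    (ℳ : DGBimod 𝒜 M) (𝒩 : DGBimod 𝒜 N) (i : ℤ)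
    extends HomDeg ℳ.toDGMod 𝒩.toDGMod i where
  map_rsmul : ∀ (x : M) (a : A), toFun (ℳ.rsmul x a) = 𝒩.rsmul (toFun x) a

/-- The Hom-complex `Hom_A(M,N)` of left DG modules is acyclic:
every homogeneous cocycle is a coboundary (differential `∂f = ∂_N ∘ f - (-1)^{|f|} f ∘ ∂_M`). -/
def HomAcyclic {𝒜 : ConnCDGA k A} {M : Type w} {N : Type w}
    [AddCommGroup M] [Module k M] [AddCommGroup N] [Module k N]
    (ℳ : DGMod 𝒜 M) (𝒩 : DGMod 𝒜 N) : Prop :=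
  ∀ (i : ℤ) (f : HomDeg ℳ 𝒩 i),
    (∀ x : M, 𝒩.d (f.toFun x) = ((-1 : k) ^ i) • f.toFun (ℳ.d x)) →
    ∃ g : HomDeg ℳ 𝒩 (i - 1),
      ∀ x : M, f.toFun x = 𝒩.d (g.toFun x) - ((-1 : k) ^ (i - 1)) • g.toFun (ℳ.d x)

/-- The Hom-complex of right DG modules is acyclic. -/
def RHomAcyclic {𝒜 : ConnCDGA k A} {M : Type w} {N : Type w}
    [AddCommGroup M] [Module k M] [AddCommGroup N] [Module k N]
    (ℳ : DGRMod 𝒜 M) (𝒩 : DGRMod 𝒜 N) : Prop :=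
  ∀ (i : ℤ) (f : RHomDeg ℳ 𝒩 i),
    (∀ x : M, 𝒩.d (f.toFun x) = ((-1 : k) ^ i) • f.toFun (ℳ.d x)) →
    ∃ g : RHomDeg ℳ 𝒩 (i - 1),
      ∀ x : M, f.toFun x = 𝒩.d (g.toFun x) - ((-1 : k) ^ (i - 1)) • g.toFun (ℳ.d x)

/-- The Hom-complex of DG bimodules is acyclic. -/
def BiHomAcyclic {𝒜 : ConnCDGA k A} {M : Type w} {N : Type w}
    [AddCommGroup M] [Module k M] [AddCommGroup N] [Module k N]
    (ℳ : DGBimod 𝒜 M) (𝒩 : DGBimod 𝒜 N) : Prop :=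
  ∀ (i : ℤ) (f : BiHomDeg ℳ 𝒩 i),
    (∀ x : M, 𝒩.d (f.toFun x) = ((-1 : k) ^ i) • f.toFun (ℳ.d x)) →
    ∃ g : BiHomDeg ℳ 𝒩 (i - 1),
      ∀ x : M, f.toFun x = 𝒩.d (g.toFun x) - ((-1 : k) ^ (i - 1)) • g.toFun (ℳ.d x)

/-- A DG module over the tensor product DG algebra `𝒜 ⊗ ℬ`, modelled as a complex with
commuting (up to Koszul sign) left `𝒜`- and left `ℬ`- DG module structures. -/
structure DGBiActMod (𝒜 : ConnCDGA k A) (ℬ : ConnCDGA k B) (M : Type w)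
    [AddCommGroup M] [Module k M] extends DGMod 𝒜 M where
  bsmul : B → M → M
  bsmul_add : ∀ (b : B) (m n : M), bsmul b (m + n) = bsmul b m + bsmul b n
  add_bsmul : ∀ (b c : B) (m : M), bsmul (b + c) m = bsmul b m + bsmul c m
  mul_bsmul : ∀ (b c : B) (m : M), bsmul (b * c) m = bsmul b (bsmul c m)
  one_bsmul : ∀ m : M, bsmul 1 m = m
  kbsmul_left : ∀ (c : k) (b : B) (m : M), bsmul (c • b) m = c • bsmul b m
  kbsmul_right : ∀ (c : k) (b : B) (m : M), bsmul b (c • m) = c • bsmul b m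
  bsmul_mem : ∀ {i j : ℤ} {b : B} {m : M}, b ∈ ℬ.gr i → m ∈ gr j → bsmul b m ∈ gr (i + j)
  bleibniz : ∀ {i : ℤ} {b : B} (m : M), b ∈ ℬ.gr i →
    d (bsmul b m) = bsmul (ℬ.d b) m + ((-1 : k) ^ i) • bsmul b (d m)
  ab_compat : ∀ {i j : ℤ} {a : A} {b : B} (m : M), a ∈ 𝒜.gr i → b ∈ ℬ.gr j →
    smul a (bsmul b m) = ((-1 : k) ^ (i * j)) • bsmul b (smul a m)

/-- A homogeneous degree-`i` element of the Hom-complex `Hom_{A⊗B}(M, N)`. -/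
structure ABHomDeg {𝒜 : ConnCDGA k A} {ℬ : ConnCDGA k B} {M : Type w} {N : Type w}
    [AddCommGroup M] [Module k M] [AddCommGroup N] [Module k N]
    (ℳ : DGBiActMod 𝒜 ℬ M) (𝒩 : DGBiActMod 𝒜 ℬ N) (i : ℤ)
    extends HomDeg ℳ.toDGMod 𝒩.toDGMod i where
  map_bsmul : ∀ {j : ℤ} {b : B} (x : M), b ∈ ℬ.gr j →
    toFun (ℳ.bsmul b x) = ((-1 : k) ^ (i * j)) • 𝒩.bsmul b (toFun x)

/-- The Hom-complex `Hom_{A⊗B}(M, N)` is acyclic. -/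
def ABHomAcyclic {𝒜 : ConnCDGA k A} {ℬ : ConnCDGA k B} {M : Type w} {N : Type w}
    [AddCommGroup M] [Module k M] [AddCommGroup N] [Module k N]
    (ℳ : DGBiActMod 𝒜 ℬ M) (𝒩 : DGBiActMod 𝒜 ℬ N) : Prop :=
  ∀ (i : ℤ) (f : ABHomDeg ℳ 𝒩 i),
    (∀ x : M, 𝒩.d (f.toFun x) = ((-1 : k) ^ i) • f.toFun (ℳ.d x)) →
    ∃ g : ABHomDeg ℳ 𝒩 (i - 1),
      ∀ x : M, f.toFun x = 𝒩.d (g.toFun x) - ((-1 : k) ^ (i - 1)) • g.toFun (ℳ.d x)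

/-- A homogeneous degree-`i` element of the Hom-complex `Hom_A(P, Hom_B(Q, E))`,
where `E` is a DG `A⊗B`-module, encoded as a two-variable function. -/
structure HomHomDeg {𝒜 : ConnCDGA k A} {ℬ : ConnCDGA k B}
    {P : Type w} {Q : Type w} {E : Type w}
    [AddCommGroup P] [Module k P] [AddCommGroup Q] [Module k Q]
    [AddCommGroup E] [Module k E]
    (MP : DGMod 𝒜 P) (MQ : DGMod ℬ Q) (ME : DGBiActMod 𝒜 ℬ E) (i : ℤ) where
  toFun : P → Q → E
  map_add₁ : ∀ (x y : P) (q : Q), toFun (x + y) q = toFun x q + toFun y q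
  map_ksmul₁ : ∀ (c : k) (x : P) (q : Q), toFun (c • x) q = c • toFun x q
  map_add₂ : ∀ (x : P) (q r : Q), toFun x (q + r) = toFun x q + toFun x r
  map_ksmul₂ : ∀ (c : k) (x : P) (q : Q), toFun x (c • q) = c • toFun x q
  map_gr : ∀ {j l : ℤ} {x : P} {q : Q}, x ∈ MP.gr j → q ∈ MQ.gr l →
    toFun x q ∈ ME.gr (i + j + l)
  map_bsmul : ∀ {j m : ℤ} {x : P} {b : B} (q : Q), x ∈ MP.gr j → b ∈ ℬ.gr m →
    toFun x (MQ.smul b q) = ((-1 : k) ^ ((i + j) * m)) • ME.bsmul b (toFun x q)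
  map_asmul : ∀ {m : ℤ} {a : A} (x : P) (q : Q), a ∈ 𝒜.gr m →
    toFun (MP.smul a x) q = ((-1 : k) ^ (i * m)) • ME.smul a (toFun x q)

/-- A DG pairing `θ : X × Y → A` between a DG `A`-bimodule `X` and a DG `A`-bimodule `Y`:
`A`-balanced, left and right `A`-linear, graded and compatible with the differentials.
Such a map induces a morphism of DG `A`-bimodules `X ⊗_A Y → A`. -/
structure IsDGPairing {𝒜 : ConnCDGA k A} {X : Type w} {Y : Type w}
    [AddCommGroup X] [Module k X] [AddCommGroup Y] [Module k Y]
    (𝕏 : DGBimod 𝒜 X) (𝕐 : DGBimod 𝒜 Y) (θ : X →ₗ[k] Y →ₗ[k] A) : Prop where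
  balanced : ∀ (a : A) (x : X) (y : Y), θ (𝕏.rsmul x a) y = θ x (𝕐.smul a y)
  left_lin : ∀ (a : A) (x : X) (y : Y), θ (𝕏.smul a x) y = a * θ x y
  right_lin : ∀ (a : A) (x : X) (y : Y), θ x (𝕐.rsmul y a) = θ x y * a
  graded : ∀ {i j : ℤ} {x : X} {y : Y}, x ∈ 𝕏.gr i → y ∈ 𝕐.gr j → θ x y ∈ 𝒜.gr (i + j)
  chain : ∀ {i : ℤ} {x : X} (y : Y), x ∈ 𝕏.gr i →
    𝒜.d (θ x y) = θ (𝕏.d x) y + ((-1 : k) ^ i) • θ x (𝕐.d y)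

/-- The `k`-subspace of `X ⊗_k Y` spanned by the elements `xa ⊗ y - x ⊗ ay`;
quotienting by it yields `X ⊗_A Y`. -/
def balancedRel {𝒜 : ConnCDGA k A} {X : Type w} {Y : Type w}
    [AddCommGroup X] [Module k X] [AddCommGroup Y] [Module k Y]
    (𝕏 : DGBimod 𝒜 X) (𝕐 : DGBimod 𝒜 Y) : Submodule k (TensorProduct k X Y) :=
  Submodule.span k {z | ∃ (a : A) (x : X) (y : Y),
    z = (𝕏.rsmul x a) ⊗ₜ[k] y - x ⊗ₜ[k] (𝕐.smul a y)}

/-- `G : A → L` is an isomorphism of DG `A`-bimodules `Σⁱ A(φ) → L`, where `Σⁱ A(φ)`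
is the shift of `A` by `i` twisted on the right by the DG automorphism `φ`
(free on a generator `e = 1` in degree `-i`, right action `e·a = (-1)^{i|a|} φ(a) e`). -/
def IsShiftTwistIso {𝒜 : ConnCDGA k A} {L : Type w} [AddCommGroup L] [Module k L]
    (𝕃 : DGBimod 𝒜 L) (i : ℤ) (φ : A → A) (G : A → L) : Prop :=
  Function.Bijective G ∧
  (∀ x y : A, G (x + y) = G x + G y) ∧
  (∀ (c : k) (x : A), G (c • x) = c • G x) ∧
  (∀ (j : ℤ) (a : A), a ∈ 𝒜.gr j ↔ G a ∈ 𝕃.gr (j - i)) ∧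
  (∀ a : A, G (𝒜.d a) = 𝕃.d (G a)) ∧
  (∀ a x : A, G (a * x) = 𝕃.smul a (G x)) ∧
  (∀ (j : ℤ) (x a : A), a ∈ 𝒜.gr j →
    𝕃.rsmul (G x) a = ((-1 : k) ^ (i * j)) • G (x * φ a))

/-- The `k`-subspace of `X ⊗_k F` (X a right DG module, F a left DG module) spanned by
the elements `xa ⊗ u - x ⊗ au`; quotienting by it yields `X ⊗_A F`. -/
def balRL {𝒜 : ConnCDGA k A} {X : Type w} {F : Type w}
    [AddCommGroup X] [Module k X] [AddCommGroup F] [Module k F]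
    (𝒳 : DGRMod 𝒜 X) (ℱ : DGMod 𝒜 F) : Submodule k (TensorProduct k X F) :=
  Submodule.span k {z | ∃ (a : A) (x : X) (u : F),
    z = (𝒳.rsmul x a) ⊗ₜ[k] u - x ⊗ₜ[k] (ℱ.smul a u)}

/-- The tensor product `X ⊗_A F` of a right DG module with a left DG module. -/
abbrev TensRL {𝒜 : ConnCDGA k A} {X : Type w} {F : Type w}
    [AddCommGroup X] [Module k X] [AddCommGroup F] [Module k F]
    (𝒳 : DGRMod 𝒜 X) (ℱ : DGMod 𝒜 F) :=
  TensorProduct k X F ⧸ balRL 𝒳 ℱ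

/-- The degree-`m` graded piece of `X ⊗_A F`. -/
def tgrRL {𝒜 : ConnCDGA k A} {X : Type w} {F : Type w}
    [AddCommGroup X] [Module k X] [AddCommGroup F] [Module k F]
    (𝒳 : DGRMod 𝒜 X) (ℱ : DGMod 𝒜 F) (m : ℤ) : Submodule k (TensRL 𝒳 ℱ) :=
  Submodule.span k {t | ∃ (p q : ℤ) (x : X) (u : F), x ∈ 𝒳.gr p ∧ u ∈ ℱ.gr q ∧
    p + q = m ∧ t = Submodule.Quotient.mk (x ⊗ₜ[k] u)}

/-- A homogeneous degree-`n` element of the Matlis dual complex `(X ⊗_A F)'`: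
a `k`-linear functional on `X ⊗_A F` supported on the graded piece of degree `-n`. -/
structure DualDegRL {𝒜 : ConnCDGA k A} {X : Type w} {F : Type w}
    [AddCommGroup X] [Module k X] [AddCommGroup F] [Module k F]
    (𝒳 : DGRMod 𝒜 X) (ℱ : DGMod 𝒜 F) (n : ℤ) where
  toFun : TensRL 𝒳 ℱ → k
  map_add : ∀ s t : TensRL 𝒳 ℱ, toFun (s + t) = toFun s + toFun t
  map_ksmul : ∀ (c : k) (t : TensRL 𝒳 ℱ), toFun (c • t) = c * toFun t
  supp : ∀ (m : ℤ), m ≠ -n → ∀ t ∈ tgrRL 𝒳 ℱ m, toFun t = 0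

/-- A homogeneous degree-`n` element of the Hom-complex `Hom_A(F, X')`, where `X'`
is the Matlis dual of the right DG module `X`, viewed as a left DG module via
`(a·f)(x) = (-1)^{|a||f|} f(xa)`; encoded as a two-variable function `F → X → k`. -/
structure HomToDualDeg {𝒜 : ConnCDGA k A} {X : Type w} {F : Type w}
    [AddCommGroup X] [Module k X] [AddCommGroup F] [Module k F]
    (𝒳 : DGRMod 𝒜 X) (ℱ : DGMod 𝒜 F) (n : ℤ) where
  toFun : F → X → k
  map_add₁ : ∀ (u v : F) (x : X), toFun (u + v) x = toFun u x + toFun v x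
  map_ksmul₁ : ∀ (c : k) (u : F) (x : X), toFun (c • u) x = c * toFun u x
  map_add₂ : ∀ (u : F) (x y : X), toFun u (x + y) = toFun u x + toFun u y
  map_ksmul₂ : ∀ (c : k) (u : F) (x : X), toFun u (c • x) = c * toFun u x
  supp : ∀ {q j : ℤ} {u : F} {x : X}, u ∈ ℱ.gr q → x ∈ 𝒳.gr j → j ≠ -(n + q) →
    toFun u x = 0
  map_smul : ∀ {m q : ℤ} {a : A} {u : F} (x : X), a ∈ 𝒜.gr m → u ∈ ℱ.gr q →
    toFun (ℱ.smul a u) x = ((-1 : k) ^ (m * q)) * toFun u (𝒳.rsmul x a)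

section AuxStatement10

variable {k : Type u} [Field k] {A : Type v} [Ring A] [Algebra k A]

theorem aux10_decomp (𝒜 : ConnCDGA k A) (xb : A)
    (hspan : 𝒜.gr 1 = Submodule.span k {xb})
    (hhigh : ∀ i : ℤ, i ≠ 0 → i ≠ 1 → 𝒜.gr i = ⊥) :
    ∀ a : A, ∃ c1 c2 : k, a = c1 • (1 : A) + c2 • xb := by
  classical
  intro a
  letI := 𝒜.decomp
  have htop : (⨆ i, 𝒜.gr i) = ⊤ :=
    (DirectSum.Decomposition.isInternal 𝒜.gr).submodule_iSup_eq_top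
  have hle : (⨆ i, 𝒜.gr i) ≤ 𝒜.gr 0 ⊔ 𝒜.gr 1 := by
    refine iSup_le fun i => ?_
    rcases eq_or_ne i 0 with rfl | h0
    · exact le_sup_left
    rcases eq_or_ne i 1 with rfl | h1
    · exact le_sup_right
    · rw [hhigh i h0 h1]; exact bot_le
  have ha : a ∈ 𝒜.gr 0 ⊔ 𝒜.gr 1 := hle (htop ▸ Submodule.mem_top)
  rcases Submodule.mem_sup.1 ha with ⟨y, hy, z, hz, rfl⟩
  rw [𝒜.deg_zero] at hy; rw [hspan] at hz
  rcases Submodule.mem_span_singleton.1 hy with ⟨c1, rfl⟩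
  rcases Submodule.mem_span_singleton.1 hz with ⟨c2, rfl⟩
  exact ⟨c1, c2, rfl⟩

theorem aux10_comm (𝒜 : ConnCDGA k A) (xb : A) (hxsq : xb * xb = 0)
    (hspan : 𝒜.gr 1 = Submodule.span k {xb})
    (hhigh : ∀ i : ℤ, i ≠ 0 → i ≠ 1 → 𝒜.gr i = ⊥) :
    ∀ a b : A, a * b = b * a := by
  intro a b
  obtain ⟨c1, c2, rfl⟩ := aux10_decomp 𝒜 xb hspan hhigh a
  obtain ⟨d1, d2, rfl⟩ := aux10_decomp 𝒜 xb hspan hhigh b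
  simp only [add_mul, mul_add, smul_mul_assoc, mul_smul_comm, one_mul, mul_one, hxsq,
    smul_zero, add_zero]
  module

end AuxStatement10
theorem aux10_pairing (𝒜 : ConnCDGA k A) (xb : A) (hx1 : xb ∈ 𝒜.gr 1) (hxsq : xb * xb = 0)
    (hspan : 𝒜.gr 1 = Submodule.span k {xb})
    (hhigh : ∀ i : ℤ, i ≠ 0 → i ≠ 1 → 𝒜.gr i = ⊥)
    (hd0 : ∀ a : A, 𝒜.d a = 0)
    {M : Type w} [AddCommGroup M] [Module k M] (𝕄 : DGBimod 𝒜 M)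
    (u : M) (hufree : Function.Bijective (fun a : A => 𝕄.smul a u))
    (hugr : ∀ (j : ℤ) (a : A), a ∈ 𝒜.gr j ↔ 𝕄.smul a u ∈ 𝕄.gr j)
    (hucomm : 𝕄.rsmul u xb = 𝕄.smul xb u)
    (cM : k) (hdu : 𝕄.d u = cM • 𝕄.smul xb u)
    {M' : Type w} [AddCommGroup M'] [Module k M'] (𝕄' : DGBimod 𝒜 M')
    (u' : M') (hufree' : Function.Bijective (fun a : A => 𝕄'.smul a u'))
    (hugr' : ∀ (j : ℤ) (a : A), a ∈ 𝒜.gr j ↔ 𝕄'.smul a u' ∈ 𝕄'.gr j)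
    (hucomm' : 𝕄'.rsmul u' xb = 𝕄'.smul xb u')
    (cM' : k) (hdu' : 𝕄'.d u' = cM' • 𝕄'.smul xb u')
    (hc : cM + cM' = 0) :
    ∃ θ : M →ₗ[k] M' →ₗ[k] A, IsDGPairing 𝕄 𝕄' θ ∧ θ u u' = 1 ∧
      ∃ hker : balancedRel 𝕄 𝕄' ≤ LinearMap.ker (TensorProduct.lift θ),
        Function.Bijective
          (Submodule.liftQ (balancedRel 𝕄 𝕄') (TensorProduct.lift θ) hker) := by
  classical
  have hdec := aux10_decomp 𝒜 xb hspan hhigh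
  have comm := aux10_comm 𝒜 xb hxsq hspan hhigh
  have hxbx : ∀ b : A, xb * b * xb = 0 := fun b => by
    rw [comm xb b, mul_assoc, hxsq, mul_zero]
  -- zero smul lemmas
  have h0M : ∀ x : M, 𝕄.smul 0 x = 0 := by
    intro x
    have h := 𝕄.add_smul 0 0 x
    rw [add_zero] at h
    exact (left_eq_add.mp h)
  have h0M' : ∀ x : M', 𝕄'.smul 0 x = 0 := by
    intro x
    have h := 𝕄'.add_smul 0 0 x
    rw [add_zero] at h
    exact (left_eq_add.mp h)
  -- the free generator equivalences
  let Φ : A →ₗ[k] M :=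
    { toFun := fun a => 𝕄.smul a u
      map_add' := fun a b => 𝕄.add_smul a b u
      map_smul' := fun c a => 𝕄.ksmul_left c a u }
  let Φ' : A →ₗ[k] M' :=
    { toFun := fun a => 𝕄'.smul a u'
      map_add' := fun a b => 𝕄'.add_smul a b u'
      map_smul' := fun c a => 𝕄'.ksmul_left c a u' }
  let E : A ≃ₗ[k] M := LinearEquiv.ofBijective Φ hufree
  let E' : A ≃ₗ[k] M' := LinearEquiv.ofBijective Φ' hufree'
  let ρ : M →ₗ[k] A := E.symm
  let ρ' : M' →ₗ[k] A := E'.symm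
  have hE : ∀ a : A, E a = 𝕄.smul a u := fun a => rfl
  have hE' : ∀ a : A, E' a = 𝕄'.smul a u' := fun a => rfl
  have hEρ : ∀ x : M, 𝕄.smul (ρ x) u = x := fun x => E.apply_symm_apply x
  have hEρ' : ∀ y : M', 𝕄'.smul (ρ' y) u' = y := fun y => E'.apply_symm_apply y
  have hρΦ : ∀ a : A, ρ (𝕄.smul a u) = a := fun a => E.symm_apply_apply a
  have hρΦ' : ∀ a : A, ρ' (𝕄'.smul a u') = a := fun a => E'.symm_apply_apply a
  have hρu : ρ u = 1 := by
    have := hρΦ 1; rwa [𝕄.one_smul u] at this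
  have hρu' : ρ' u' = 1 := by
    have := hρΦ' 1; rwa [𝕄'.one_smul u'] at this
  have hρs : ∀ (a : A) (x : M), ρ (𝕄.smul a x) = a * ρ x := by
    intro a x
    conv_lhs => rw [← hEρ x]
    rw [← 𝕄.mul_smul, hρΦ]
  have hρs' : ∀ (a : A) (y : M'), ρ' (𝕄'.smul a y) = a * ρ' y := by
    intro a y
    conv_lhs => rw [← hEρ' y]
    rw [← 𝕄'.mul_smul, hρΦ']
  have hgr : ∀ (i : ℤ) (x : M), x ∈ 𝕄.gr i ↔ ρ x ∈ 𝒜.gr i := by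
    intro i x
    have h := (hugr i (ρ x)).symm
    rwa [hEρ x] at h
  have hgr' : ∀ (i : ℤ) (y : M'), y ∈ 𝕄'.gr i ↔ ρ' y ∈ 𝒜.gr i := by
    intro i y
    have h := (hugr' i (ρ' y)).symm
    rwa [hEρ' y] at h
  -- right action on the generator
  have hru : ∀ a : A, 𝕄.rsmul u a = 𝕄.smul a u := by
    intro a
    obtain ⟨c1, c2, rfl⟩ := hdec a
    rw [𝕄.add_rsmul, 𝕄.krsmul_right, 𝕄.krsmul_right, 𝕄.one_rsmul, hucomm,
      𝕄.add_smul, 𝕄.ksmul_left, 𝕄.ksmul_left, 𝕄.one_smul]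
  have hru' : ∀ a : A, 𝕄'.rsmul u' a = 𝕄'.smul a u' := by
    intro a
    obtain ⟨c1, c2, rfl⟩ := hdec a
    rw [𝕄'.add_rsmul, 𝕄'.krsmul_right, 𝕄'.krsmul_right, 𝕄'.one_rsmul, hucomm',
      𝕄'.add_smul, 𝕄'.ksmul_left, 𝕄'.ksmul_left, 𝕄'.one_smul]
  have hrx : ∀ (x : M) (a : A), 𝕄.rsmul x a = 𝕄.smul (ρ x * a) u := by
    intro x a
    conv_lhs => rw [← hEρ x]
    rw [𝕄.smul_rsmul_assoc, hru, ← 𝕄.mul_smul]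
  have hrx' : ∀ (y : M') (a : A), 𝕄'.rsmul y a = 𝕄'.smul (ρ' y * a) u' := by
    intro y a
    conv_lhs => rw [← hEρ' y]
    rw [𝕄'.smul_rsmul_assoc, hru', ← 𝕄'.mul_smul]
  have hρr : ∀ (x : M) (a : A), ρ (𝕄.rsmul x a) = ρ x * a := by
    intro x a; rw [hrx, hρΦ]
  have hρr' : ∀ (y : M') (a : A), ρ' (𝕄'.rsmul y a) = ρ' y * a := by
    intro y a; rw [hrx', hρΦ']
  have hneg1 : ((-1 : k) ^ (1 : ℤ)) = -1 := zpow_one _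
  -- differential formulas
  have hdΦ : ∀ a : A, 𝕄.d (𝕄.smul a u) = 𝕄.smul (cM • (a * xb)) u := by
    intro a
    obtain ⟨c1, c2, rfl⟩ := hdec a
    have h1 : 𝕄.d (𝕄.smul xb u) = 0 := by
      have := 𝕄.leibniz u hx1
      rw [this, hd0, h0M, hdu, 𝕄.ksmul_right, ← 𝕄.mul_smul, hxsq, h0M, smul_zero,
        smul_zero, zero_add]
    have hsm : 𝕄.smul (c1 • (1 : A) + c2 • xb) u = c1 • u + c2 • 𝕄.smul xb u := by
      rw [𝕄.add_smul, 𝕄.ksmul_left, 𝕄.ksmul_left, 𝕄.one_smul]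
    rw [hsm, map_add, map_smul, map_smul, hdu, h1, smul_zero, add_zero]
    have hmul : (c1 • (1 : A) + c2 • xb) * xb = c1 • xb := by
      rw [add_mul, smul_mul_assoc, smul_mul_assoc, one_mul, hxsq, smul_zero, add_zero]
    rw [hmul, smul_smul, ← 𝕄.ksmul_left, smul_smul, mul_comm c1 cM]
  have hdΦ' : ∀ a : A, 𝕄'.d (𝕄'.smul a u') = 𝕄'.smul (cM' • (a * xb)) u' := by
    intro a
    obtain ⟨c1, c2, rfl⟩ := hdec a
    have h1 : 𝕄'.d (𝕄'.smul xb u') = 0 := by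
      have := 𝕄'.leibniz u' hx1
      rw [this, hd0, h0M', hdu', 𝕄'.ksmul_right, ← 𝕄'.mul_smul, hxsq, h0M', smul_zero,
        smul_zero, zero_add]
    have hsm : 𝕄'.smul (c1 • (1 : A) + c2 • xb) u' = c1 • u' + c2 • 𝕄'.smul xb u' := by
      rw [𝕄'.add_smul, 𝕄'.ksmul_left, 𝕄'.ksmul_left, 𝕄'.one_smul]
    rw [hsm, map_add, map_smul, map_smul, hdu', h1, smul_zero, add_zero]
    have hmul : (c1 • (1 : A) + c2 • xb) * xb = c1 • xb := by
      rw [add_mul, smul_mul_assoc, smul_mul_assoc, one_mul, hxsq, smul_zero, add_zero]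
    rw [hmul, smul_smul, ← 𝕄'.ksmul_left, smul_smul, mul_comm c1 cM']
  have hρd : ∀ x : M, ρ (𝕄.d x) = cM • (ρ x * xb) := by
    intro x
    conv_lhs => rw [← hEρ x]
    rw [hdΦ, hρΦ]
  have hρd' : ∀ y : M', ρ' (𝕄'.d y) = cM' • (ρ' y * xb) := by
    intro y
    conv_lhs => rw [← hEρ' y]
    rw [hdΦ', hρΦ']
  -- the pairing
  let θ0 : M →ₗ[k] M' →ₗ[k] A := LinearMap.mk₂ k (fun x y => ρ x * ρ' y)
    (fun x₁ x₂ y => by simp only [map_add, add_mul])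
    (fun c x y => by simp only [map_smul, smul_mul_assoc])
    (fun x y₁ y₂ => by simp only [map_add, mul_add])
    (fun c x y => by simp only [map_smul, mul_smul_comm])
  have hθ0 : ∀ (x : M) (y : M'), θ0 x y = ρ x * ρ' y := fun _ _ => rfl
  refine ⟨θ0, ?_, ?_, ?_⟩
  · constructor
    · intro a x y
      rw [hθ0, hθ0, hρr, hρs', mul_assoc]
    · intro a x y
      rw [hθ0, hθ0, hρs, mul_assoc]
    · intro a x y
      rw [hθ0, hθ0, hρr', mul_assoc]
    · intro i j x y hx hy
      rw [hθ0]
      exact 𝒜.mul_mem ((hgr i x).1 hx) ((hgr' j y).1 hy)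
    · intro i x y hx
      rw [hθ0, hθ0, hθ0, hd0, hρd, hρd']
      rcases eq_or_ne i 0 with rfl | h0
      · rw [zpow_zero, one_smul, smul_mul_assoc, mul_smul_comm, mul_assoc,
          comm xb (ρ' y), ← mul_assoc, ← add_smul, hc, zero_smul]
      rcases eq_or_ne i 1 with rfl | h1
      · have hx1' : ρ x ∈ Submodule.span k {xb} := by
          rw [← hspan]; exact (hgr 1 x).1 hx
        obtain ⟨c, hcx⟩ := Submodule.mem_span_singleton.1 hx1'
        have t1 : (c • xb) * xb = 0 := by rw [smul_mul_assoc, hxsq, smul_zero]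
        have t2 : (c • xb) * (cM' • (ρ' y * xb)) = 0 := by
          rw [smul_mul_assoc, mul_smul_comm, ← mul_assoc, hxbx, smul_zero, smul_zero]
        rw [← hcx, t1, t2, smul_zero, zero_mul, smul_zero, add_zero]
      · have hx0 : ρ x = 0 := by
          have := (hgr i x).1 hx
          rw [hhigh i h0 h1] at this
          simpa using this
        rw [hx0, zero_mul, zero_mul, smul_zero, zero_mul, smul_zero, add_zero]
  · rw [hθ0, hρu, hρu', one_mul]
  · have hFt : ∀ (x : M) (y : M'),
        TensorProduct.lift θ0 (x ⊗ₜ[k] y) = ρ x * ρ' y := by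
      intro x y
      rw [TensorProduct.lift.tmul, hθ0]
    have hker : balancedRel 𝕄 𝕄' ≤ LinearMap.ker (TensorProduct.lift θ0) := by
      rw [balancedRel, Submodule.span_le]
      rintro z ⟨a, x, y, rfl⟩
      simp only [SetLike.mem_coe, LinearMap.mem_ker, map_sub, hFt]
      rw [hρr, hρs', mul_assoc, sub_self]
    refine ⟨hker, ?_⟩
    have key : ∀ z : TensorProduct k M M',
        z - (𝕄.smul (TensorProduct.lift θ0 z) u) ⊗ₜ[k] u' ∈ balancedRel 𝕄 𝕄' := by
      intro z
      induction z using TensorProduct.induction_on with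
      | zero =>
          rw [map_zero, h0M, TensorProduct.zero_tmul, sub_zero]
          exact zero_mem _
      | tmul x y =>
          have hgen : (𝕄.rsmul x (ρ' y)) ⊗ₜ[k] u' - x ⊗ₜ[k] (𝕄'.smul (ρ' y) u') ∈
              balancedRel 𝕄 𝕄' :=
            Submodule.subset_span ⟨ρ' y, x, u', rfl⟩
          rw [hrx, hEρ'] at hgen
          have hneg := Submodule.neg_mem _ hgen
          rw [neg_sub] at hneg
          rwa [hFt]
      | add z1 z2 h1 h2 =>
          have heq : (z1 + z2) - (𝕄.smul (TensorProduct.lift θ0 (z1 + z2)) u) ⊗ₜ[k] u' =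
              (z1 - (𝕄.smul (TensorProduct.lift θ0 z1) u) ⊗ₜ[k] u') +
                (z2 - (𝕄.smul (TensorProduct.lift θ0 z2) u) ⊗ₜ[k] u') := by
            rw [map_add, 𝕄.add_smul, TensorProduct.add_tmul]
            abel
          rw [heq]
          exact add_mem h1 h2
    constructor
    · rw [← LinearMap.ker_eq_bot]
      apply Submodule.ker_liftQ_eq_bot
      intro z hz
      have hFz : TensorProduct.lift θ0 z = 0 := hz
      have hk := key z
      rwa [hFz, h0M, TensorProduct.zero_tmul, sub_zero] at hk
    · intro a
      refine ⟨Submodule.Quotient.mk ((𝕄.smul a u) ⊗ₜ[k] u'), ?_⟩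
      rw [Submodule.liftQ_apply, hFt, hρΦ, hρu', mul_one]
/-- Let `char k ≠ 2` and let `A = k[x]/(x²)` with `|x̄| = 1` and zero
differential (characterised abstractly below). Let `L` be the DG `A`-bimodule free on a
degree-`0` generator `e` with `e·x̄ = x̄·e` and `∂_L(e) = x̄e`, and let `L^∨` be the DG
`A`-bimodule free on a degree-`0` generator `f` with `f·x̄ = x̄·f` and `∂_{L^∨}(f) = -x̄f`.
Then (i) the pairings `θ` with `θ(e ⊗ f) = 1` and `ω` with `ω(f ⊗ e) = 1` induce
isomorphisms of DG `A`-bimodules `L ⊗_A L^∨ ≅ A` and `L^∨ ⊗_A L ≅ A`, so `L` is an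
invertible DG `A`-bimodule; but (ii) `L` is not isomorphic to `Σⁱ A(φ)` as a DG
`A`-bimodule for any `i ∈ ℤ` and any DG algebra automorphism `φ` of `A`. -/
theorem dual_numbers_invertible_bimodule_not_twist
    {k : Type u} [Field k] (h2 : (2 : k) ≠ 0)
    {A : Type v} [Ring A] [Algebra k A] (𝒜 : ConnCDGA k A)
    (xb : A) (hx1 : xb ∈ 𝒜.gr 1) (hxsq : xb * xb = 0) (hxne : xb ≠ 0)
    (hspan : 𝒜.gr 1 = Submodule.span k {xb})
    (hhigh : ∀ i : ℤ, i ≠ 0 → i ≠ 1 → 𝒜.gr i = ⊥)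
    (hd0 : ∀ a : A, 𝒜.d a = 0)
    {L : Type w} [AddCommGroup L] [Module k L] (𝕃 : DGBimod 𝒜 L)
    (e : L) (he : e ∈ 𝕃.gr 0)
    (hefree : Function.Bijective (fun a : A => 𝕃.smul a e))
    (hegr : ∀ (j : ℤ) (a : A), a ∈ 𝒜.gr j ↔ 𝕃.smul a e ∈ 𝕃.gr j)
    (hecomm : 𝕃.rsmul e xb = 𝕃.smul xb e)
    (hde : 𝕃.d e = 𝕃.smul xb e)
    {L' : Type w} [AddCommGroup L'] [Module k L'] (𝕃' : DGBimod 𝒜 L')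
    (f : L') (hf : f ∈ 𝕃'.gr 0)
    (hffree : Function.Bijective (fun a : A => 𝕃'.smul a f))
    (hfgr : ∀ (j : ℤ) (a : A), a ∈ 𝒜.gr j ↔ 𝕃'.smul a f ∈ 𝕃'.gr j)
    (hfcomm : 𝕃'.rsmul f xb = 𝕃'.smul xb f)
    (hdf : 𝕃'.d f = - 𝕃'.smul xb f) :
    -- (i) `L` is an invertible DG `A`-bimodule, via `θ(e ⊗ f) = 1` and `ω(f ⊗ e) = 1`
    ((∃ θ : L →ₗ[k] L' →ₗ[k] A, IsDGPairing 𝕃 𝕃' θ ∧ θ e f = 1 ∧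
        ∃ hker : balancedRel 𝕃 𝕃' ≤ LinearMap.ker (TensorProduct.lift θ),
          Function.Bijective
            (Submodule.liftQ (balancedRel 𝕃 𝕃') (TensorProduct.lift θ) hker)) ∧
      (∃ ω : L' →ₗ[k] L →ₗ[k] A, IsDGPairing 𝕃' 𝕃 ω ∧ ω f e = 1 ∧
        ∃ hker : balancedRel 𝕃' 𝕃 ≤ LinearMap.ker (TensorProduct.lift ω),
          Function.Bijective
            (Submodule.liftQ (balancedRel 𝕃' 𝕃) (TensorProduct.lift ω) hker))) ∧
    -- (ii) nevertheless `L` is not isomorphic to any `Σⁱ A(φ)`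
    (¬ ∃ (i : ℤ) (φ : A → A) (G : A → L), IsDGAut 𝒜 φ ∧ IsShiftTwistIso 𝕃 i φ G) := by
  constructor
  · constructor
    · exact aux10_pairing 𝒜 xb hx1 hxsq hspan hhigh hd0 𝕃 e hefree hegr hecomm 1
        (by rw [one_smul]; exact hde) 𝕃' f hffree hfgr hfcomm (-1)
        (by rw [neg_one_smul]; exact hdf) (by ring)
    · exact aux10_pairing 𝒜 xb hx1 hxsq hspan hhigh hd0 𝕃' f hffree hfgr hfcomm (-1)
        (by rw [neg_one_smul]; exact hdf) 𝕃 e hefree hegr hecomm 1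
        (by rw [one_smul]; exact hde) (by ring)
  · rintro ⟨i, φ, G, hφ, hbij, hadd, hksmul, hgrG, hchain, hsm, hrs⟩
    have hG0 : G 0 = 0 := by
      have h := hadd 0 0
      rw [add_zero] at h
      exact (left_eq_add.mp h)
    obtain ⟨a, ha⟩ := hbij.2 e
    have hdG : 𝕃.d e = 0 := by
      rw [← ha, ← hchain a, hd0, hG0]
    rw [hde] at hdG
    have h0L : 𝕃.smul 0 e = 0 := by
      have h := 𝕃.add_smul 0 0 e
      rw [add_zero] at h
      exact (left_eq_add.mp h)
    exact hxne (hefree.1 (show 𝕃.smul xb e = 𝕃.smul 0 e by rw [hdG, h0L]))
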